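/- (Backward error analysis, dual part.) Suppose α̂ ∈ ℝⁿ and ŵ ∈ ℝ^d are such that for every i, gᵢ(α̂ᵢ) is finite and −ŵᵀxᵢ is a subgradient of gᵢ at α̂ᵢ, i.e., gᵢ(z) ≥ gᵢ(α̂ᵢ) + (−ŵᵀxᵢ)·(z − α̂ᵢ) for all z ∈ ℝ. Let w̄ = ∑_{i=1}^n α̂ᵢ xᵢ and ε = w̄ − ŵ. Then α̂ is a global minimizer over ℝⁿ of the perturbed dual objective α ↦ D(α) − ∑_{i=1}^n αᵢ·(εᵀxᵢ). -/

import Mathlib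

lemma ereal_coe_sum {ι : Type*} (s : Finset ι) (f : ι → ℝ) :
    ((∑ i ∈ s, f i : ℝ) : EReal) = ∑ i ∈ s, ((f i : ℝ) : EReal) :=
  map_sum (⟨⟨Real.toEReal, EReal.coe_zero⟩, EReal.coe_add⟩ : ℝ →+ EReal) f s


open scoped RealInnerProductSpace

/-- Backward error analysis, dual part. If `−ŵᵀxᵢ` is a subgradient of the convex
function `gᵢ` at `α̂ᵢ` (with `gᵢ(α̂ᵢ)` finite) for every `i`, and
`w̄ = ∑ α̂ᵢxᵢ`, `ε = w̄ − ŵ`, then `α̂` globally minimizes the perturbed dual objective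
`α ↦ D(α) − ∑ αᵢ·(εᵀxᵢ)`, where `D(α) = (1/2)‖∑ αᵢxᵢ‖² + ∑ gᵢ(αᵢ)`. -/
theorem backward_error_dual
    (n d : ℕ) (hn : 1 ≤ n) (hd : 1 ≤ d)
    (x : Fin n → EuclideanSpace ℝ (Fin d)) (hx : ∀ i, x i ≠ 0)
    (g : Fin n → ℝ → EReal)
    (hgconv : ∀ i, ∀ a b θ : ℝ, 0 ≤ θ → θ ≤ 1 →
      g i (θ * a + (1 - θ) * b) ≤ (θ : EReal) * g i a + ((1 - θ : ℝ) : EReal) * g i b)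
    (D : (Fin n → ℝ) → EReal)
    (hD : ∀ α, D α = (((1 / 2) * ‖∑ i, α i • x i‖ ^ 2 : ℝ) : EReal) + ∑ i, g i (α i))
    (αhat : Fin n → ℝ) (what : EuclideanSpace ℝ (Fin d))
    (hfin : ∀ i, g i (αhat i) ≠ ⊤ ∧ g i (αhat i) ≠ ⊥)
    (hsubgrad : ∀ i, ∀ z : ℝ,
      g i (αhat i) + (((-⟪what, x i⟫) * (z - αhat i) : ℝ) : EReal) ≤ g i z)
    (wbar : EuclideanSpace ℝ (Fin d)) (hwbar : wbar = ∑ i, αhat i • x i)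
    (ε : EuclideanSpace ℝ (Fin d)) (hε : ε = wbar - what) :
    ∀ α : Fin n → ℝ,
      D αhat + ((-(∑ i, αhat i * ⟪ε, x i⟫) : ℝ) : EReal)
        ≤ D α + ((-(∑ i, α i * ⟪ε, x i⟫) : ℝ) : EReal) := by
  intro α
  set t : Fin n → ℝ := fun i => (g i (αhat i)).toReal with ht
  have htc : ∀ i, g i (αhat i) = ((t i : ℝ) : EReal) := fun i =>
    (EReal.coe_toReal (hfin i).1 (hfin i).2).symm
  set wα : EuclideanSpace ℝ (Fin d) := ∑ i, α i • x i with hwα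
  set C : ℝ := ∑ i, (t i + (-⟪what, x i⟫) * (α i - αhat i)) with hC
  have hinner : ∀ (v : EuclideanSpace ℝ (Fin d)) (β : Fin n → ℝ),
      ∑ i, β i * ⟪v, x i⟫ = ⟪v, ∑ i, β i • x i⟫ := by
    intro v β
    rw [inner_sum]
    simp_rw [real_inner_smul_right]
  -- step 1: sum of subgradient inequalities
  have hstep1 : ((C : ℝ) : EReal) ≤ ∑ i, g i (α i) := by
    rw [hC, ereal_coe_sum]
    apply Finset.sum_le_sum
    intro i _
    rw [EReal.coe_add, ← htc i]
    exact hsubgrad i (α i)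
  -- real inequality
  have hreal : (1 / 2) * ‖wbar‖ ^ 2 + ∑ i, t i + (-(∑ i, αhat i * ⟪ε, x i⟫))
      ≤ (1 / 2) * ‖wα‖ ^ 2 + C + (-(∑ i, α i * ⟪ε, x i⟫)) := by
    have hsplit : C = ∑ i, t i + (-(⟪what, wα⟫ - ⟪what, wbar⟫)) := by
      rw [hC, Finset.sum_add_distrib]
      congr 1
      have h1 : ∑ i, (-⟪what, x i⟫) * (α i - αhat i)
          = -(∑ i, α i * ⟪what, x i⟫ - ∑ i, αhat i * ⟪what, x i⟫) := by
        rw [← Finset.sum_sub_distrib, ← Finset.sum_neg_distrib]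
        congr 1; ext i; ring
      rw [h1, hinner what α, hinner what αhat, ← hwbar, ← hwα]
    rw [hsplit, hinner ε α, hinner ε αhat, ← hwbar, ← hwα, hε]
    have hkey : (1 / 2) * ‖wα‖ ^ 2 - (1 / 2) * ‖wbar‖ ^ 2 - ⟪wbar, wα - wbar⟫
        = (1 / 2) * ‖wα - wbar‖ ^ 2 := by
      have hns := norm_sub_sq_real wα wbar
      have h2 : ⟪wbar, wα - wbar⟫ = ⟪wbar, wα⟫ - ⟪wbar, wbar⟫ := inner_sub_right _ _ _
      rw [h2, real_inner_self_eq_norm_sq, real_inner_comm]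
      nlinarith [hns]
    have hsq : 0 ≤ (1 / 2) * ‖wα - wbar‖ ^ 2 := by positivity
    have h3 : ⟪wbar - what, wα⟫ = ⟪wbar, wα⟫ - ⟪what, wα⟫ := inner_sub_left _ _ _
    have h4 : ⟪wbar - what, wbar⟫ = ⟪wbar, wbar⟫ - ⟪what, wbar⟫ := inner_sub_left _ _ _
    have h5 : ⟪wbar, wα - wbar⟫ = ⟪wbar, wα⟫ - ⟪wbar, wbar⟫ := inner_sub_right _ _ _
    nlinarith [hkey, hsq]
  -- assemble
  calc D αhat + ((-(∑ i, αhat i * ⟪ε, x i⟫) : ℝ) : EReal)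
      = (((1 / 2) * ‖wbar‖ ^ 2 + ∑ i, t i + (-(∑ i, αhat i * ⟪ε, x i⟫)) : ℝ) : EReal) := by
        rw [hD]
        simp only [htc]
        rw [← ereal_coe_sum, ← hwbar, ← EReal.coe_add, ← EReal.coe_add]
    _ ≤ (((1 / 2) * ‖wα‖ ^ 2 + C + (-(∑ i, α i * ⟪ε, x i⟫)) : ℝ) : EReal) := by
        exact_mod_cast hreal
    _ = (((1 / 2) * ‖wα‖ ^ 2 : ℝ) : EReal) + ((C : ℝ) : EReal)
          + ((-(∑ i, α i * ⟪ε, x i⟫) : ℝ) : EReal) := by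
        rw [EReal.coe_add, EReal.coe_add]
    _ ≤ D α + ((-(∑ i, α i * ⟪ε, x i⟫) : ℝ) : EReal) := by
        rw [hD, ← hwα]
        exact add_le_add_left (add_le_add_right hstep1 _) _
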